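/- Let e ≥ 2, let d ≥ 1 be an integer that is not an e-th power of an integer, and let z ≥ 1 be an integer. Then for every 0 ≤ k ≤ e−2, the sequence of real numbers μ_n(e,k,d,z) / μ_n(e,e−1,d,z) converges, as n → ∞, to d^{(e−k−1)/e} (the real (e−k−1)/e-th power of d). -/

import Mathlib

open Filter Topology

/-- The generalized Rédei polynomials
`μ_n(e,k,d,z) = Σ_{h=0}^{n} C(n, e·h − k) · d^{(e−1)h − k} · z^{n − e·h + k}`,
where the binomial coefficient is `0` when `e·h − k < 0` or `e·h − k > n`. -/
def mu (e k : ℕ) (d z : ℤ) (n : ℕ) : ℤ :=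
  ∑ h ∈ Finset.range (n + 1),
    if k ≤ e * h then
      (n.choose (e * h - k) : ℤ) * d ^ ((e - 1) * h - k) * z ^ (n + k - e * h)
    else 0

noncomputable def muG (e : ℕ) (zr β : ℝ) (n : ℕ) (i : ZMod e) : ℝ :=
  ∑ j ∈ Finset.range (n + 1),
    if (j : ZMod e) = -i then (n.choose j : ℝ) * zr ^ (n - j) * β ^ j else 0

lemma muG_zero (e : ℕ) (zr β : ℝ) (i : ZMod e) :
    muG e zr β 0 i = if i = 0 then 1 else 0 := by
  simp [muG, eq_comm (a := (0 : ZMod e)), neg_eq_zero]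

lemma muG_succ (e : ℕ) (zr β : ℝ) (n : ℕ) (i : ZMod e) :
    muG e zr β (n + 1) i = zr * muG e zr β n i + β * muG e zr β n (i + 1) := by
  classical
  set a : ℕ → ℝ := fun j =>
    if (j : ZMod e) = -i then (n.choose j : ℝ) * zr ^ (n + 1 - j) * β ^ j else 0 with ha
  set b : ℕ → ℝ := fun j =>
    if ((j + 1 : ℕ) : ZMod e) = -i then (n.choose j : ℝ) * zr ^ (n - j) * β ^ (j + 1) else 0 with hb
  have step1 : muG e zr β (n + 1) i
      = (∑ j ∈ Finset.range (n + 2), a j) + ∑ j ∈ Finset.range (n + 1), b j := by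
    unfold muG
    rw [Finset.sum_range_succ' _ (n + 1), Finset.sum_range_succ' a (n + 1)]
    have hsplit : ∀ j,
        (if ((j + 1 : ℕ) : ZMod e) = -i then
          ((n + 1).choose (j + 1) : ℝ) * zr ^ (n + 1 - (j + 1)) * β ^ (j + 1) else 0)
        = a (j + 1) + b j := by
      intro j
      simp only [ha, hb, Nat.choose_succ_succ' n j, Nat.succ_sub_succ]
      push_cast
      split_ifs with hc
      · ring
      · simp
    simp only [hsplit]
    rw [Finset.sum_add_distrib]
    have h0 : (if ((0 : ℕ) : ZMod e) = -i then ((n + 1).choose 0 : ℝ) * zr ^ (n + 1 - 0) * β ^ 0 else 0)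
        = a 0 := by simp [ha]
    rw [h0]; ring
  have step2 : (∑ j ∈ Finset.range (n + 2), a j) = zr * muG e zr β n i := by
    rw [Finset.sum_range_succ]
    have : a (n + 1) = 0 := by simp [ha, Nat.choose_succ_self]
    rw [this, add_zero, muG, Finset.mul_sum]
    apply Finset.sum_congr rfl
    intro j hj
    have hj' : j ≤ n := by simpa [Nat.lt_succ_iff] using hj
    have hpow : n + 1 - j = (n - j) + 1 := by omega
    simp only [ha, mul_ite, mul_zero, hpow, pow_succ]
    split_ifs with hc
    · ring
    · rfl
  have step3 : (∑ j ∈ Finset.range (n + 1), b j) = β * muG e zr β n (i + 1) := by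
    rw [muG, Finset.mul_sum]
    apply Finset.sum_congr rfl
    intro j hj
    have hcond : (((j + 1 : ℕ) : ZMod e) = -i) ↔ ((j : ZMod e) = -(i + 1)) := by
      push_cast
      constructor
      · intro h; linear_combination h
      · intro h; linear_combination h
    simp only [hb, mul_ite, mul_zero, hcond]
    split_ifs with hc
    · ring
    · rfl
  rw [step1, step2, step3]

lemma mu_bridge (e k : ℕ) (he : 2 ≤ e) (hk : k < e) (d z : ℤ) (hd : 1 ≤ d) (n : ℕ) :
    (d : ℝ) ^ ((k : ℝ) / (e : ℝ)) * ((mu e k d z n : ℤ) : ℝ)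
      = muG e (z : ℝ) ((d : ℝ) ^ (((e : ℝ) - 1) / (e : ℝ))) n (k : ZMod e) := by
  classical
  have hd0 : (0 : ℝ) < (d : ℝ) := by exact_mod_cast lt_of_lt_of_le one_pos hd
  have he0 : (e : ℝ) ≠ 0 := Nat.cast_ne_zero.2 (by omega)
  have hepos : 0 < e := by omega
  set β := (d : ℝ) ^ (((e : ℝ) - 1) / (e : ℝ)) with hβ
  set s : Finset ℕ := (Finset.range (n + 1)).filter (fun h => k ≤ e * h ∧ e * h ≤ n + k) with hs
  set t : Finset ℕ := (Finset.range (n + 1)).filter (fun j => (j : ZMod e) = -(k : ZMod e)) with ht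
  have hsub : s ⊆ (Finset.range (n + 1)).filter (fun h => k ≤ e * h) := by
    intro x hx
    simp only [hs, Finset.mem_filter] at hx
    exact Finset.mem_filter.2 ⟨hx.1, hx.2.1⟩
  have L : (d : ℝ) ^ ((k : ℝ) / (e : ℝ)) * ((mu e k d z n : ℤ) : ℝ)
      = ∑ h ∈ s, (n.choose (e * h - k) : ℝ) * (z : ℝ) ^ (n - (e * h - k)) * β ^ (e * h - k) := by
    unfold mu
    push_cast [apply_ite (fun x : ℤ => (x : ℝ))]
    rw [Finset.mul_sum]
    have step1 : ∀ h : ℕ,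
        (d : ℝ) ^ ((k : ℝ) / (e : ℝ)) *
          (if k ≤ e * h then (n.choose (e * h - k) : ℝ) * (d : ℝ) ^ ((e - 1) * h - k)
              * (z : ℝ) ^ (n + k - e * h) else 0)
        = if k ≤ e * h then
            (d : ℝ) ^ ((k : ℝ) / (e : ℝ)) * (n.choose (e * h - k) : ℝ)
              * (d : ℝ) ^ ((e - 1) * h - k) * (z : ℝ) ^ (n + k - e * h) else 0 := by
      intro h; split_ifs with hc
      · ring
      · simp
    simp only [step1]
    rw [← Finset.sum_filter]
    have hzero : ∀ x ∈ (Finset.range (n + 1)).filter (fun h => k ≤ e * h), x ∉ s →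
        (d : ℝ) ^ ((k : ℝ) / (e : ℝ)) * (n.choose (e * x - k) : ℝ)
          * (d : ℝ) ^ ((e - 1) * x - k) * (z : ℝ) ^ (n + k - e * x) = 0 := by
      intro x hx hx'
      simp only [Finset.mem_filter, Finset.mem_range] at hx
      simp only [hs, Finset.mem_filter, Finset.mem_range] at hx'
      have hlt : n + k < e * x := by
        by_contra hcon
        exact hx' ⟨hx.1, hx.2, by omega⟩
      have hch : n.choose (e * x - k) = 0 := Nat.choose_eq_zero_of_lt (by omega)
      simp [hch]
    rw [← Finset.sum_subset hsub hzero]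
    apply Finset.sum_congr rfl
    intro h hh
    simp only [hs, Finset.mem_filter, Finset.mem_range] at hh
    have hkh : k ≤ e * h := hh.2.1
    have hhn : e * h ≤ n + k := hh.2.2
    have hk1 : k ≤ (e - 1) * h := by
      rcases Nat.eq_zero_or_pos h with h0 | h1
      · subst h0; simpa using hkh
      · have : e - 1 ≤ (e - 1) * h := Nat.le_mul_of_pos_right _ h1
        omega
    have hzexp : n + k - e * h = n - (e * h - k) := by omega
    rw [hzexp]
    have hdpart : (d : ℝ) ^ ((k : ℝ) / (e : ℝ)) * (d : ℝ) ^ ((e - 1) * h - k)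
        = β ^ (e * h - k) := by
      rw [← Real.rpow_natCast (d : ℝ) ((e - 1) * h - k), ← Real.rpow_natCast β (e * h - k),
        hβ, ← Real.rpow_mul hd0.le, ← Real.rpow_add hd0]
      congr 1
      push_cast [Nat.cast_sub hk1, Nat.cast_sub hkh, Nat.cast_sub (by omega : 1 ≤ e)]
      field_simp
      ring
    calc (d : ℝ) ^ ((k : ℝ) / (e : ℝ)) * (n.choose (e * h - k) : ℝ)
          * (d : ℝ) ^ ((e - 1) * h - k) * (z : ℝ) ^ (n - (e * h - k))
        = ((d : ℝ) ^ ((k : ℝ) / (e : ℝ)) * (d : ℝ) ^ ((e - 1) * h - k))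
          * ((n.choose (e * h - k) : ℝ) * (z : ℝ) ^ (n - (e * h - k))) := by ring
      _ = _ := by rw [hdpart]; ring
  have R : muG e (z : ℝ) β n (k : ZMod e)
      = ∑ j ∈ t, (n.choose j : ℝ) * (z : ℝ) ^ (n - j) * β ^ j := by
    rw [muG, ht, Finset.sum_filter]
  rw [L, R]
  apply Finset.sum_nbij' (i := fun h => e * h - k) (j := fun j => (j + k) / e)
  · intro h hh
    simp only [hs, Finset.mem_filter, Finset.mem_range] at hh
    have hkh : k ≤ e * h := hh.2.1
    have hhn : e * h ≤ n + k := hh.2.2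
    rw [ht, Finset.mem_filter]
    constructor
    · rw [Finset.mem_range]; omega
    · have h1 : ((e * h - k : ℕ) : ZMod e) + (k : ZMod e) = ((e * h : ℕ) : ZMod e) := by
        rw [← Nat.cast_add, Nat.sub_add_cancel hkh]
      have h2 : ((e * h : ℕ) : ZMod e) = 0 := by
        push_cast [ZMod.natCast_self]
        ring
      rw [h2] at h1
      linear_combination h1
  · intro j hj
    simp only [ht, Finset.mem_filter, Finset.mem_range] at hj
    have hdvd : e ∣ j + k := by
      rw [← ZMod.natCast_eq_zero_iff]
      push_cast
      rw [hj.2]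
      ring
    obtain ⟨m, hm⟩ := hdvd
    have hdiv : (j + k) / e = m := by rw [hm, Nat.mul_div_cancel_left _ hepos]
    have hjn : j ≤ n := by omega
    have hmn : m ≤ n := by
      by_contra hcon
      have h1 : n + 1 ≤ m := by omega
      have : e * (n + 1) ≤ e * m := Nat.mul_le_mul_left e h1
      have hne : n ≤ e * n := Nat.le_mul_of_pos_left n hepos
      have : e * (n + 1) = e * n + e := by ring
      omega
    rw [hs, Finset.mem_filter, hdiv]
    refine ⟨Finset.mem_range.2 (by omega), by omega, by omega⟩
  · intro h hh
    simp only [hs, Finset.mem_filter, Finset.mem_range] at hh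
    rw [Nat.sub_add_cancel hh.2.1, Nat.mul_div_cancel_left _ hepos]
  · intro j hj
    simp only [ht, Finset.mem_filter, Finset.mem_range] at hj
    have hdvd : e ∣ j + k := by
      rw [← ZMod.natCast_eq_zero_iff]
      push_cast
      rw [hj.2]
      ring
    obtain ⟨m, hm⟩ := hdvd
    rw [hm, Nat.mul_div_cancel_left _ hepos]
    omega
  · intro h _
    rfl

lemma dynamics (e : ℕ) (he : 2 ≤ e) (p q : ℝ) (hp : 0 < p) (hq : 0 < q)
    (hpq : p + q = 1) (u : ℕ → ZMod e → ℝ)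
    (h0 : ∀ i : ZMod e, u 0 i = if i = 0 then 1 else 0)
    (hrec : ∀ n (i : ZMod e), u (n + 1) i = p * u n i + q * u n (i + 1)) :
    ∃ α : ℝ, 0 < α ∧ (∀ n, e ≤ n → ∀ i : ZMod e, α ≤ u n i) ∧
      ∀ i j : ZMod e, Tendsto (fun n => u n i / u n j) atTop (𝓝 1) := by
  classical
  haveI : NeZero e := ⟨by omega⟩
  haveI : Fact (1 < e) := ⟨by omega⟩
  have hne : (Finset.univ : Finset (ZMod e)).Nonempty := Finset.univ_nonempty
  set Mx : ℕ → ℝ := fun n => Finset.univ.sup' hne (u n) with hMx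
  set mn : ℕ → ℝ := fun n => Finset.univ.inf' hne (u n) with hmn
  have hu_le : ∀ n (i : ZMod e), u n i ≤ Mx n :=
    fun n i => Finset.le_sup' (u n) (Finset.mem_univ i)
  have hu_ge : ∀ n (i : ZMod e), mn n ≤ u n i :=
    fun n i => Finset.inf'_le (u n) (Finset.mem_univ i)
  have hmM : ∀ n, mn n ≤ Mx n := fun n => (hu_ge n 0).trans (hu_le n 0)
  set c := min p q with hc
  have hc0 : 0 < c := lt_min hp hq
  have hchalf : c ≤ 1 / 2 := by
    have h1 := min_le_left p q
    have h2 := min_le_right p q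
    rw [hc]; nlinarith
  set α := c ^ e with hα
  have hα0 : 0 < α := pow_pos hc0 e
  have hαhalf : α ≤ 1 / 2 := by
    have : c ^ e ≤ c := pow_le_of_le_one hc0.le (by linarith) (by omega)
    rw [hα]; linarith
  -- key upper bound
  have keyU : ∀ (n m t : ℕ) (i : ZMod e), t ≤ m →
      u (n + m) i ≤ Mx n - p ^ (m - t) * q ^ t * (Mx n - u n (i + (t : ZMod e))) := by
    intro n m
    induction m with
    | zero =>
      intro t i ht
      have ht0 : t = 0 := by omega
      subst ht0
      simp only [Nat.add_zero, Nat.sub_zero, pow_zero, one_mul, Nat.cast_zero, add_zero]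
      linarith
    | succ m ih =>
      intro t i ht
      have hQ : ∀ j : ZMod e, 0 ≤ Mx n - u n j := fun j => by linarith [hu_le n j]
      have hMb : ∀ j : ZMod e, u (n + m) j ≤ Mx n := by
        intro j
        have h1 := ih 0 j (Nat.zero_le m)
        simp only [Nat.sub_zero, pow_zero, mul_one, Nat.cast_zero, add_zero] at h1
        nlinarith [pow_nonneg hp.le m, hQ j]
      have hstep : n + (m + 1) = (n + m) + 1 := by omega
      rw [hstep, hrec]
      by_cases ht' : t ≤ m
      · have h1 := ih t i ht'
        have h2 := hMb (i + 1)
        have hexp : m + 1 - t = (m - t) + 1 := by omega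
        calc p * u (n + m) i + q * u (n + m) (i + 1)
            ≤ p * (Mx n - p ^ (m - t) * q ^ t * (Mx n - u n (i + (t : ZMod e)))) + q * Mx n :=
              add_le_add (mul_le_mul_of_nonneg_left h1 hp.le) (mul_le_mul_of_nonneg_left h2 hq.le)
          _ = Mx n - p ^ (m + 1 - t) * q ^ t * (Mx n - u n (i + (t : ZMod e))) := by
              rw [hexp, pow_succ]
              linear_combination (Mx n) * hpq
      · have ht2 : t = m + 1 := by omega
        subst ht2
        have h1 := hMb i
        have h2 := ih m (i + 1) le_rfl
        have hidx : i + 1 + ((m : ℕ) : ZMod e) = i + (((m + 1 : ℕ) : ZMod e)) := by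
          push_cast; ring
        rw [hidx] at h2
        simp only [Nat.sub_self, pow_zero, one_mul] at h2 ⊢
        calc p * u (n + m) i + q * u (n + m) (i + 1)
            ≤ p * Mx n + q * (Mx n - q ^ m * (Mx n - u n (i + (((m + 1 : ℕ) : ZMod e))))) :=
              add_le_add (mul_le_mul_of_nonneg_left h1 hp.le) (mul_le_mul_of_nonneg_left h2 hq.le)
          _ = Mx n - q ^ (m + 1) * (Mx n - u n (i + (((m + 1 : ℕ) : ZMod e)))) := by
              rw [pow_succ]
              linear_combination (Mx n) * hpq
  -- key lower bound
  have keyL : ∀ (n m t : ℕ) (i : ZMod e), t ≤ m →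
      mn n + p ^ (m - t) * q ^ t * (u n (i + (t : ZMod e)) - mn n) ≤ u (n + m) i := by
    intro n m
    induction m with
    | zero =>
      intro t i ht
      have ht0 : t = 0 := by omega
      subst ht0
      simp only [Nat.add_zero, Nat.sub_zero, pow_zero, one_mul, Nat.cast_zero, add_zero]
      linarith
    | succ m ih =>
      intro t i ht
      have hQ : ∀ j : ZMod e, 0 ≤ u n j - mn n := fun j => by linarith [hu_ge n j]
      have hmb : ∀ j : ZMod e, mn n ≤ u (n + m) j := by
        intro j
        have h1 := ih 0 j (Nat.zero_le m)
        simp only [Nat.sub_zero, pow_zero, mul_one, Nat.cast_zero, add_zero] at h1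
        nlinarith [pow_nonneg hp.le m, hQ j]
      have hstep : n + (m + 1) = (n + m) + 1 := by omega
      rw [hstep, hrec]
      by_cases ht' : t ≤ m
      · have h1 := ih t i ht'
        have h2 := hmb (i + 1)
        have hexp : m + 1 - t = (m - t) + 1 := by omega
        calc mn n + p ^ (m + 1 - t) * q ^ t * (u n (i + (t : ZMod e)) - mn n)
            = p * (mn n + p ^ (m - t) * q ^ t * (u n (i + (t : ZMod e)) - mn n)) + q * mn n := by
              rw [hexp, pow_succ]
              linear_combination (-(mn n)) * hpq
          _ ≤ p * u (n + m) i + q * u (n + m) (i + 1) :=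
              add_le_add (mul_le_mul_of_nonneg_left h1 hp.le) (mul_le_mul_of_nonneg_left h2 hq.le)
      · have ht2 : t = m + 1 := by omega
        subst ht2
        have h1 := hmb i
        have h2 := ih m (i + 1) le_rfl
        have hidx : i + 1 + ((m : ℕ) : ZMod e) = i + (((m + 1 : ℕ) : ZMod e)) := by
          push_cast; ring
        rw [hidx] at h2
        simp only [Nat.sub_self, pow_zero, one_mul] at h2 ⊢
        calc mn n + q ^ (m + 1) * (u n (i + (((m + 1 : ℕ) : ZMod e))) - mn n)
            = p * mn n + q * (mn n + q ^ m * (u n (i + (((m + 1 : ℕ) : ZMod e))) - mn n)) := by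
              rw [pow_succ]
              linear_combination (-(mn n)) * hpq
          _ ≤ p * u (n + m) i + q * u (n + m) (i + 1) :=
              add_le_add (mul_le_mul_of_nonneg_left h1 hp.le) (mul_le_mul_of_nonneg_left h2 hq.le)
  -- choosing the time shift
  have hshift : ∀ i i₀ : ZMod e, ∃ t : ℕ, t ≤ e ∧ i + (t : ZMod e) = i₀ := by
    intro i i₀
    by_cases hio : i₀ = i
    · exact ⟨e, le_rfl, by simp [hio, ZMod.natCast_self]⟩
    · refine ⟨(i₀ - i).val, (ZMod.val_lt _).le, ?_⟩
      rw [ZMod.natCast_rightInverse (i₀ - i)]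
      ring
  have hpowα : ∀ t : ℕ, t ≤ e → α ≤ p ^ (e - t) * q ^ t := by
    intro t htle
    have h1 : c ^ (e - t) ≤ p ^ (e - t) := pow_le_pow_left₀ hc0.le (min_le_left p q) _
    have h2 : c ^ t ≤ q ^ t := pow_le_pow_left₀ hc0.le (min_le_right p q) _
    calc α = c ^ (e - t) * c ^ t := by rw [hα, ← pow_add]; congr 1; omega
      _ ≤ p ^ (e - t) * q ^ t :=
        mul_le_mul h1 h2 (pow_nonneg hc0.le t) (pow_nonneg hp.le _)
  -- contraction steps
  have hMstep : ∀ n, Mx (n + e) ≤ Mx n - α * (Mx n - mn n) := by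
    intro n
    obtain ⟨i₀, -, hi₀⟩ := Finset.exists_mem_eq_inf' hne (u n)
    have hgoal : ∀ i : ZMod e, u (n + e) i ≤ Mx n - α * (Mx n - mn n) := by
      intro i
      obtain ⟨t, htle, hti⟩ := hshift i i₀
      have hkey := keyU n e t i htle
      rw [hti, ← hi₀] at hkey
      have hpa := hpowα t htle
      have hΔ : 0 ≤ Mx n - mn n := by linarith [hmM n]
      nlinarith
    exact Finset.sup'_le hne _ (fun i _ => hgoal i)
  have hmstep : ∀ n, mn n + α * (Mx n - mn n) ≤ mn (n + e) := by
    intro n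
    obtain ⟨i₀, -, hi₀⟩ := Finset.exists_mem_eq_sup' hne (u n)
    have hgoal : ∀ i : ZMod e, mn n + α * (Mx n - mn n) ≤ u (n + e) i := by
      intro i
      obtain ⟨t, htle, hti⟩ := hshift i i₀
      have hkey := keyL n e t i htle
      rw [hti, ← hi₀] at hkey
      have hpa := hpowα t htle
      have hΔ : 0 ≤ Mx n - mn n := by linarith [hmM n]
      nlinarith
    exact Finset.le_inf' hne _ (fun i _ => hgoal i)
  -- monotonicity
  have hMdec : ∀ n, Mx (n + 1) ≤ Mx n := by
    intro n
    apply Finset.sup'_le hne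
    intro i _
    rw [hrec]
    have e1 : p * u n i ≤ p * Mx n := mul_le_mul_of_nonneg_left (hu_le n i) hp.le
    have e2 : q * u n (i + 1) ≤ q * Mx n := mul_le_mul_of_nonneg_left (hu_le n (i + 1)) hq.le
    have e3 : p * Mx n + q * Mx n = Mx n := by linear_combination (Mx n) * hpq
    linarith
  have hminc : ∀ n, mn n ≤ mn (n + 1) := by
    intro n
    apply Finset.le_inf' hne
    intro i _
    rw [hrec]
    have e1 : p * mn n ≤ p * u n i := mul_le_mul_of_nonneg_left (hu_ge n i) hp.le
    have e2 : q * mn n ≤ q * u n (i + 1) := mul_le_mul_of_nonneg_left (hu_ge n (i + 1)) hq.le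
    have e3 : p * mn n + q * mn n = mn n := by linear_combination (mn n) * hpq
    linarith
  have hm_mono : Monotone mn := monotone_nat_of_le_succ hminc
  -- oscillation
  set osc : ℕ → ℝ := fun n => Mx n - mn n with hosc
  have hosc0 : ∀ n, 0 ≤ osc n := fun n => sub_nonneg.2 (hmM n)
  have hosc_anti : Antitone osc :=
    antitone_nat_of_succ_le (fun n => by
      have := hMdec n; have := hminc n
      simp only [hosc]; linarith)
  have h2α0 : 0 ≤ 1 - 2 * α := by linarith
  have h2α1 : 1 - 2 * α < 1 := by linarith
  have hosc_step : ∀ n, osc (n + e) ≤ (1 - 2 * α) * osc n := by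
    intro n
    have := hMstep n; have := hmstep n
    simp only [hosc]; nlinarith
  have hosc_geom : ∀ j : ℕ, osc (e * j) ≤ (1 - 2 * α) ^ j * osc 0 := by
    intro j
    induction j with
    | zero => simp
    | succ j ih =>
      have h1 : e * (j + 1) = e * j + e := by ring
      rw [h1, pow_succ]
      calc osc (e * j + e) ≤ (1 - 2 * α) * osc (e * j) := hosc_step _
        _ ≤ (1 - 2 * α) * ((1 - 2 * α) ^ j * osc 0) := mul_le_mul_of_nonneg_left ih h2α0
        _ = (1 - 2 * α) ^ j * (1 - 2 * α) * osc 0 := by ring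
  have hdiv_top : Tendsto (fun n : ℕ => n / e) atTop atTop := by
    apply tendsto_atTop_atTop.2
    intro b
    exact ⟨e * b, fun n hn => (Nat.le_div_iff_mul_le (by omega : 0 < e)).2 (by nlinarith)⟩
  have hosc_lim : Tendsto osc atTop (𝓝 0) := by
    apply squeeze_zero hosc0 (g := fun n => (1 - 2 * α) ^ (n / e) * osc 0)
    · intro n
      have h1 : e * (n / e) ≤ n := Nat.mul_div_le n e
      calc osc n ≤ osc (e * (n / e)) := hosc_anti h1
        _ ≤ _ := hosc_geom _
    · have h1 := (tendsto_pow_atTop_nhds_zero_of_lt_one h2α0 h2α1).comp hdiv_top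
      simpa using h1.mul_const (osc 0)
  -- initial values
  have hM0 : Mx 0 = 1 := by
    apply le_antisymm
    · apply Finset.sup'_le hne
      intro i _
      rw [h0]
      split_ifs <;> norm_num
    · have h1 := Finset.le_sup' (u 0) (Finset.mem_univ (0 : ZMod e))
      rw [h0, if_pos rfl] at h1
      exact h1
  have hm0 : mn 0 = 0 := by
    apply le_antisymm
    · have h1 := Finset.inf'_le (u 0) (Finset.mem_univ (1 : ZMod e))
      rw [h0, if_neg (one_ne_zero : (1 : ZMod e) ≠ 0)] at h1
      exact h1
    · apply Finset.le_inf' hne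
      intro i _
      rw [h0]
      split_ifs <;> norm_num
  have hlb : ∀ n, e ≤ n → ∀ i : ZMod e, α ≤ u n i := by
    intro n hn i
    have h1 := hmstep 0
    rw [hM0, hm0] at h1
    simp only [zero_add, sub_zero, mul_one] at h1
    calc α ≤ mn e := h1
      _ ≤ mn n := hm_mono hn
      _ ≤ u n i := hu_ge n i
  refine ⟨α, hα0, hlb, ?_⟩
  intro i j
  have hdiff : ∀ n, |u n i - u n j| ≤ osc n := by
    intro n
    rw [abs_sub_le_iff]
    constructor
    · have := hu_le n i; have := hu_ge n j; simp only [hosc]; linarith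
    · have := hu_le n j; have := hu_ge n i; simp only [hosc]; linarith
  have hev : ∀ᶠ n in atTop, ‖u n i / u n j - 1‖ ≤ osc n / α := by
    filter_upwards [eventually_ge_atTop e] with n hn
    have hja : α ≤ u n j := hlb n hn j
    have hjpos : 0 < u n j := lt_of_lt_of_le hα0 hja
    have heq : u n i / u n j - 1 = (u n i - u n j) / u n j := by
      field_simp
    rw [heq, Real.norm_eq_abs, abs_div, abs_of_pos hjpos]
    exact div_le_div₀ (hosc0 n) (hdiff n) hα0 hja
  have hlim0 : Tendsto (fun n => u n i / u n j - 1) atTop (𝓝 0) := by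
    apply squeeze_zero_norm' hev
    simpa using hosc_lim.div_const α
  have := hlim0.add_const 1
  simpa using this

private lemma mu_div_helper_aux (zr βr s sn a b : ℝ) (hs : s ≠ 0) (hsn : sn ≠ 0) :
    (zr * a + βr * b) / (sn * s) = zr / s * (a / sn) + βr / s * (b / sn) := by
  rw [add_div, div_mul_div_comm, div_mul_div_comm, mul_comm s sn]

private lemma mu_ratio_helper_aux (a b A B sn : ℝ) (hA : A ≠ 0) (hB : B ≠ 0) (hsn : sn ≠ 0)
    (hb : b ≠ 0) : (B / A) * (a / b) = (a * sn / A) / (b * sn / B) := by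
  field_simp

/-- If `d ≥ 1` is not an `e`-th power and `z ≥ 1`, then for `0 ≤ k ≤ e−2` the
ratio `μ_n(e,k,d,z) / μ_n(e,e−1,d,z)` tends to `d^{(e−k−1)/e}` as `n → ∞`. -/
theorem mu_ratio_tendsto_root (e : ℕ) (he : 2 ≤ e) (d : ℤ) (hd : 1 ≤ d)
    (hdpow : ¬ ∃ m : ℤ, m ^ e = d) (z : ℤ) (hz : 1 ≤ z)
    (k : ℕ) (hk : k ≤ e - 2) :
    Tendsto (fun n : ℕ => (mu e k d z n : ℝ) / (mu e (e - 1) d z n : ℝ))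
      atTop (𝓝 ((d : ℝ) ^ (((e : ℝ) - (k : ℝ) - 1) / (e : ℝ)))) := by
  classical
  haveI : NeZero e := ⟨by omega⟩
  have hd0 : (0 : ℝ) < (d : ℝ) := by exact_mod_cast lt_of_lt_of_le one_pos hd
  have hz0 : (0 : ℝ) < (z : ℝ) := by exact_mod_cast lt_of_lt_of_le one_pos hz
  set β : ℝ := (d : ℝ) ^ (((e : ℝ) - 1) / (e : ℝ)) with hβ
  have hβ0 : 0 < β := Real.rpow_pos_of_pos hd0 _
  set s : ℝ := (z : ℝ) + β with hsdef
  have hs0 : (0 : ℝ) < s := by rw [hsdef]; linarith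
  set u : ℕ → ZMod e → ℝ := fun n i => muG e (z : ℝ) β n i / s ^ n with hu
  have h0 : ∀ i : ZMod e, u 0 i = if i = 0 then 1 else 0 := by
    intro i
    simp [hu, muG_zero]
  have hrec : ∀ n (i : ZMod e),
      u (n + 1) i = ((z : ℝ) / s) * u n i + (β / s) * u n (i + 1) := by
    intro n i
    simp only [hu]
    rw [muG_succ, pow_succ]
    exact mu_div_helper_aux _ _ _ _ _ _ hs0.ne' (pow_ne_zero n hs0.ne')
  obtain ⟨α, hα0, hlb, hratio⟩ := dynamics e he ((z : ℝ) / s) (β / s)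
    (by positivity) (by positivity) (by rw [← add_div, ← hsdef, div_self hs0.ne']) u h0 hrec
  have hkk : k < e := by omega
  have he1 : e - 1 < e := by omega
  set C : ℝ := (d : ℝ) ^ (((e : ℝ) - (k : ℝ) - 1) / (e : ℝ)) with hC
  have hA0 : (0 : ℝ) < (d : ℝ) ^ ((k : ℝ) / (e : ℝ)) := Real.rpow_pos_of_pos hd0 _
  have hB0 : (0 : ℝ) < (d : ℝ) ^ ((((e - 1 : ℕ)) : ℝ) / (e : ℝ)) := Real.rpow_pos_of_pos hd0 _
  have hCval : C = (d : ℝ) ^ ((((e - 1 : ℕ)) : ℝ) / (e : ℝ)) / (d : ℝ) ^ ((k : ℝ) / (e : ℝ)) := by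
    rw [hC, ← Real.rpow_sub hd0]
    congr 1
    push_cast [Nat.cast_sub (by omega : 1 ≤ e)]
    ring
  have hratio' := hratio (k : ZMod e) (((e - 1 : ℕ)) : ZMod e)
  have hev : (fun n : ℕ => C * (u n (k : ZMod e) / u n (((e - 1 : ℕ)) : ZMod e)))
      =ᶠ[atTop] (fun n : ℕ => (mu e k d z n : ℝ) / (mu e (e - 1) d z n : ℝ)) := by
    filter_upwards [eventually_ge_atTop e] with n hn
    have hsn : (0 : ℝ) < s ^ n := pow_pos hs0 n
    have hb1 := mu_bridge e k he hkk d z hd n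
    have hb2 := mu_bridge e (e - 1) he he1 d z hd n
    rw [← hβ] at hb1 hb2
    have hmug1 : muG e (z : ℝ) β n (k : ZMod e) = u n (k : ZMod e) * s ^ n := by
      simp only [hu]
      field_simp
    have hmug2 : muG e (z : ℝ) β n (((e - 1 : ℕ)) : ZMod e)
        = u n (((e - 1 : ℕ)) : ZMod e) * s ^ n := by
      simp only [hu]
      field_simp
    rw [hmug1] at hb1
    rw [hmug2] at hb2
    have hjpos : 0 < u n (((e - 1 : ℕ)) : ZMod e) :=
      lt_of_lt_of_le hα0 (hlb n hn _)
    have hμ1 : (mu e k d z n : ℝ)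
        = u n (k : ZMod e) * s ^ n / (d : ℝ) ^ ((k : ℝ) / (e : ℝ)) := by
      rw [eq_div_iff hA0.ne']
      linarith [hb1]
    have hμ2 : (mu e (e - 1) d z n : ℝ)
        = u n (((e - 1 : ℕ)) : ZMod e) * s ^ n / (d : ℝ) ^ ((((e - 1 : ℕ)) : ℝ) / (e : ℝ)) := by
      rw [eq_div_iff hB0.ne']
      linarith [hb2]
    rw [hμ1, hμ2, hCval]
    exact mu_ratio_helper_aux _ _ _ _ _ hA0.ne' hB0.ne' hsn.ne' hjpos.ne' 
  have hfinal : Tendsto (fun n : ℕ => C * (u n (k : ZMod e) / u n (((e - 1 : ℕ)) : ZMod e)))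
      atTop (𝓝 (C * 1)) := hratio'.const_mul C
  rw [mul_one] at hfinal
  exact hfinal.congr' hev
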